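/- Let n ≥ 1, let α, β satisfy 0 ≤ α < 1/(n+1) and 0 ≤ β < 1/(n+1), and let Φ ∈ COMFORT(Δ_n) be such that Φ restricts to a homeomorphism of ♣_{n,α} onto ♣_{n,β}. Then for every x ∈ Δ_n and every index i ∈ {0,…,n}: x_i = α if and only if Φ(x)_i = β. -/

import Mathlib

open scoped BigOperators

noncomputable section

/-- `Spx k` is the standard simplex on `k` coordinates, i.e. the standard simplex
`Δ_{k-1}` of the paper, as a subspace of `ℝ^k`. -/
abbrev Spx (k : ℕ) : Type := {x : Fin k → ℝ // x ∈ stdSimplex ℝ (Fin k)}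

lemma perm_mem {k : ℕ} (ϑ : Equiv.Perm (Fin k)) {x : Fin k → ℝ}
    (hx : x ∈ stdSimplex ℝ (Fin k)) :
    (fun i => x (ϑ i)) ∈ stdSimplex ℝ (Fin k) :=
  ⟨fun i => hx.1 (ϑ i), (Equiv.sum_comp ϑ x).trans hx.2⟩

/-- membership of `COMFORT (Δ_n)`: a self-homeomorphism of the standard simplex which
(i) respects coordinate permutations and (ii) keeps the order. -/
structure IsComfort {n : ℕ} (F : Spx (n+1) ≃ₜ Spx (n+1)) : Prop where
  perm : ∀ (ϑ : Equiv.Perm (Fin (n+1))) (x : Spx (n+1)),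
      ((F ⟨fun i => x.1 (ϑ i), perm_mem ϑ x.2⟩ : Spx (n+1)) : Fin (n+1) → ℝ)
        = fun i => (F x).1 (ϑ i)
  mono : ∀ (x : Spx (n+1)) (i j : Fin (n+1)), x.1 i ≤ x.1 j → (F x).1 i ≤ (F x).1 j

/-- the `α`-cross `♣_{n,α}` of `Δ_n`. -/
def cross (n : ℕ) (α : ℝ) : Set (Spx (n+1)) := {x | ∃ j, x.1 j = α}

/-- the boundary `BOU_n = ♣_{n,0}` of `Δ_n`. -/
def bou (n : ℕ) : Set (Spx (n+1)) := cross n 0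

/-- the barycenter `Center_n` of `Δ_n`. -/
def center (n : ℕ) : Spx (n+1) :=
  ⟨fun _ => 1/((n:ℝ)+1), by
    constructor
    · intro i
      positivity
    · rw [Finset.sum_const, Finset.card_univ, Fintype.card_fin, nsmul_eq_mul]
      push_cast
      field_simp⟩

/-- the minimal coordinate of a point of `Δ_n`. -/
def minCoord {n : ℕ} (x : Spx (n+1)) : ℝ :=
  Finset.univ.inf' Finset.univ_nonempty x.1

/-- the `α`-layer `Layer_{n,α}` of `Δ_n`. -/
def layer (n : ℕ) (α : ℝ) : Set (Spx (n+1)) := {x | minCoord x = α}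

/-- `Sponge (Δ_n)`: the points of `Δ_n` with pairwise distinct coordinates. -/
def sponge (n : ℕ) : Set (Spx (n+1)) := {x | ∀ i j, x.1 i = x.1 j → i = j}

/- ======================= auxiliary lemmas ======================= -/

namespace CF

variable {n : ℕ}

lemma exists_big (x : Spx (n+1)) : ∃ m, 1/((n:ℝ)+1) ≤ x.1 m := by
  by_contra h
  push_neg at h
  have h1 : ∑ j, x.1 j < ∑ _j : Fin (n+1), 1/((n:ℝ)+1) :=
    Finset.sum_lt_sum_of_nonempty Finset.univ_nonempty fun j _ => h j
  rw [x.2.2, Finset.sum_const, Finset.card_univ, Fintype.card_fin, nsmul_eq_mul] at h1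
  have hne : ((n:ℝ)+1) ≠ 0 := by positivity
  push_cast at h1
  rw [mul_one_div, div_self hne] at h1
  exact lt_irrefl 1 h1

lemma eq_coord {F : Spx (n+1) ≃ₜ Spx (n+1)}
    (hperm : ∀ (ϑ : Equiv.Perm (Fin (n+1))) (x : Spx (n+1)),
      ((F ⟨fun i => x.1 (ϑ i), perm_mem ϑ x.2⟩ : Spx (n+1)) : Fin (n+1) → ℝ)
        = fun i => (F x).1 (ϑ i))
    (x : Spx (n+1)) {i j : Fin (n+1)} (h : x.1 i = x.1 j) :
    (F x).1 i = (F x).1 j := by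
  have hfix : (⟨fun k => x.1 (Equiv.swap i j k), perm_mem _ x.2⟩ : Spx (n+1)) = x := by
    apply Subtype.ext
    funext k
    show x.1 (Equiv.swap i j k) = x.1 k
    rcases eq_or_ne k i with rfl | hki
    · rw [Equiv.swap_apply_left]; exact h.symm
    · rcases eq_or_ne k j with rfl | hkj
      · rw [Equiv.swap_apply_right]; exact h
      · rw [Equiv.swap_apply_of_ne_of_ne hki hkj]
  have h2 := hperm (Equiv.swap i j) x
  rw [hfix] at h2
  have h3 := congrFun h2 i
  rwa [Equiv.swap_apply_left] at h3

lemma symm_perm {F : Spx (n+1) ≃ₜ Spx (n+1)} (hF : IsComfort F) :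
    ∀ (ϑ : Equiv.Perm (Fin (n+1))) (x : Spx (n+1)),
      ((F.symm ⟨fun i => x.1 (ϑ i), perm_mem ϑ x.2⟩ : Spx (n+1)) : Fin (n+1) → ℝ)
        = fun i => (F.symm x).1 (ϑ i) := by
  intro ϑ x
  have key : F ⟨fun i => (F.symm x).1 (ϑ i), perm_mem ϑ (F.symm x).2⟩
      = ⟨fun i => x.1 (ϑ i), perm_mem ϑ x.2⟩ := by
    apply Subtype.ext
    refine (hF.perm ϑ (F.symm x)).trans ?_
    funext i
    simp
  rw [← key, Homeomorph.symm_apply_apply]; rfl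

lemma comfort_symm {F : Spx (n+1) ≃ₜ Spx (n+1)} (hF : IsComfort F) : IsComfort F.symm := by
  refine ⟨symm_perm hF, ?_⟩
  intro x i j h
  by_contra hlt
  push_neg at hlt
  have h1 := hF.mono (F.symm x) j i hlt.le
  simp only [Homeomorph.apply_symm_apply] at h1
  have hxeq : x.1 i = x.1 j := le_antisymm h h1
  exact (ne_of_gt hlt) (eq_coord (symm_perm hF) x hxeq)

lemma center_fix {F : Spx (n+1) ≃ₜ Spx (n+1)} (hF : IsComfort F) : F (center n) = center n := by
  have hc : ∀ i j : Fin (n+1), (F (center n)).1 i = (F (center n)).1 j :=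
    fun i j => eq_coord hF.perm _ rfl
  apply Subtype.ext
  funext i
  have hsum := (F (center n)).2.2
  have h2 : ∑ j, (F (center n)).1 j = ((n:ℝ)+1) * (F (center n)).1 i := by
    rw [Finset.sum_congr rfl fun j _ => hc j i, Finset.sum_const, Finset.card_univ,
      Fintype.card_fin, nsmul_eq_mul]
    push_cast; ring
  rw [h2] at hsum
  have hne : ((n:ℝ)+1) ≠ 0 := by positivity
  show (F (center n)).1 i = 1/((n:ℝ)+1)
  field_simp
  linarith

lemma mem_cross_iff {α β : ℝ} {Φ : Spx (n+1) ≃ₜ Spx (n+1)}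
    (hmap : ⇑Φ '' cross n α = cross n β) (x : Spx (n+1)) :
    Φ x ∈ cross n β ↔ x ∈ cross n α := by
  constructor
  · intro h
    rw [← hmap] at h
    obtain ⟨z, hz, hzx⟩ := h
    rwa [← Φ.injective hzx]
  · intro h
    rw [← hmap]
    exact ⟨x, h, rfl⟩

lemma hmap_symm {α β : ℝ} {Φ : Spx (n+1) ≃ₜ Spx (n+1)}
    (hmap : ⇑Φ '' cross n α = cross n β) :
    ⇑Φ.symm '' cross n β = cross n α := by
  have hcomp : ⇑Φ.symm ∘ ⇑Φ = id := funext fun z => Φ.symm_apply_apply z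
  rw [← hmap, ← Set.image_comp, hcomp, Set.image_id]

/- clamping -/

def clampTo (b t : ℝ) : ℝ := max 0 (min b t)

lemma clampTo_nonneg (b t : ℝ) : 0 ≤ clampTo b t := le_max_left _ _

lemma clampTo_le {b : ℝ} (hb : 0 ≤ b) (t : ℝ) : clampTo b t ≤ b :=
  max_le hb (min_le_left _ _)

lemma clampTo_cont (b : ℝ) : Continuous (clampTo b) :=
  continuous_const.max (continuous_const.min continuous_id)

lemma clampTo_zero {b : ℝ} (hb : 0 ≤ b) : clampTo b 0 = 0 := by
  rw [clampTo, min_eq_right hb, max_self]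

lemma clampTo_of_mem {b t : ℝ} (h0 : 0 ≤ t) (ht : t ≤ b) : clampTo b t = t := by
  rw [clampTo, min_eq_right ht, max_eq_right h0]

lemma clampTo_one_self : clampTo 1 1 = 1 := clampTo_of_mem zero_le_one le_rfl

/- convex combination helpers -/

lemma comb_lt {c u v w : ℝ} (h0 : 0 ≤ c) (h1 : c ≤ 1) (hu : u < w) (hv : v < w) :
    (1-c)*u + c*v < w := by
  rcases le_total u v with h | h <;> nlinarith

lemma comb_gt {c u v w : ℝ} (h0 : 0 ≤ c) (h1 : c ≤ 1) (hu : w < u) (hv : w < v) :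
    w < (1-c)*u + c*v := by
  rcases le_total u v with h | h <;> nlinarith

/- segments -/

def seg (x y : Spx (n+1)) (t : ℝ) : Spx (n+1) :=
  ⟨fun i => (1 - clampTo 1 t) * x.1 i + clampTo 1 t * y.1 i, by
    have h0 : 0 ≤ clampTo 1 t := clampTo_nonneg 1 t
    have h1 : clampTo 1 t ≤ 1 := clampTo_le zero_le_one t
    constructor
    · intro i
      exact add_nonneg (mul_nonneg (by linarith) (x.2.1 i)) (mul_nonneg h0 (y.2.1 i))
    · rw [Finset.sum_add_distrib, ← Finset.mul_sum, ← Finset.mul_sum, x.2.2, y.2.2]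
      ring⟩

lemma seg_coord (x y : Spx (n+1)) (t : ℝ) (i : Fin (n+1)) :
    (seg x y t).1 i = (1 - clampTo 1 t) * x.1 i + clampTo 1 t * y.1 i := rfl

lemma seg_zero (x y : Spx (n+1)) : seg x y 0 = x := by
  apply Subtype.ext
  funext i
  rw [seg_coord, clampTo_zero zero_le_one]
  ring

lemma seg_one (x y : Spx (n+1)) : seg x y 1 = y := by
  apply Subtype.ext
  funext i
  rw [seg_coord, clampTo_one_self]
  ring

lemma seg_cont (x y : Spx (n+1)) : Continuous (seg x y) := by
  apply Continuous.subtype_mk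
  apply continuous_pi
  intro i
  exact ((continuous_const.sub (clampTo_cont 1)).mul continuous_const).add
    ((clampTo_cont 1).mul continuous_const)

lemma sign_transfer {β : ℝ} {f : ℝ → ℝ} (hf : Continuous f) (hne : ∀ t, f t ≠ β) :
    (f 0 < β ↔ f 1 < β) := by
  constructor
  · intro h0
    by_contra h1
    have h1' : β < f 1 := lt_of_le_of_ne (not_lt.1 h1) (Ne.symm (hne 1))
    obtain ⟨t, _, hft⟩ := intermediate_value_Icc zero_le_one hf.continuousOn
      (Set.mem_Icc.2 ⟨h0.le, h1'.le⟩)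
    exact hne t hft
  · intro h1
    by_contra h0
    have h0' : β < f 0 := lt_of_le_of_ne (not_lt.1 h0) (Ne.symm (hne 0))
    obtain ⟨t, _, hft⟩ := intermediate_value_Icc' zero_le_one hf.continuousOn
      (Set.mem_Icc.2 ⟨h1.le, h0'.le⟩)
    exact hne t hft

/- perturbation families -/

def fam (x : Spx (n+1)) (S : Finset (Fin (n+1))) (m : Fin (n+1)) (d t₀ : ℝ) (t : ℝ) :
    Fin (n+1) → ℝ := fun k =>
  if k ∈ S then x.1 k + d * clampTo t₀ t
  else if k = m then x.1 m - (S.card : ℝ) * (d * clampTo t₀ t) else x.1 k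

lemma fam_sum (x : Spx (n+1)) {S : Finset (Fin (n+1))} {m : Fin (n+1)} (hm : m ∉ S)
    (d t₀ t : ℝ) : ∑ k, fam x S m d t₀ t k = 1 := by
  have hrw : ∀ k, fam x S m d t₀ t k
      = x.1 k + ((if k ∈ S then d * clampTo t₀ t else 0)
        + (if k = m then -((S.card : ℝ) * (d * clampTo t₀ t)) else 0)) := by
    intro k
    unfold fam
    by_cases h1 : k ∈ S
    · have h2 : k ≠ m := fun h => hm (h ▸ h1)
      rw [if_pos h1, if_pos h1, if_neg h2]; ring
    · rw [if_neg h1, if_neg h1]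
      by_cases h2 : k = m
      · rw [if_pos h2, if_pos h2, h2]; ring
      · rw [if_neg h2, if_neg h2]; ring
  simp_rw [hrw]
  rw [Finset.sum_add_distrib, x.2.2, Finset.sum_add_distrib, Finset.sum_ite_mem,
    Finset.univ_inter, Finset.sum_const, Finset.sum_ite_eq' Finset.univ m,
    if_pos (Finset.mem_univ m), nsmul_eq_mul]
  ring

lemma fam_mem (x : Spx (n+1)) {S : Finset (Fin (n+1))} {m : Fin (n+1)} (hm : m ∉ S)
    (d t₀ t : ℝ)
    (h1 : ∀ k ∈ S, 0 ≤ x.1 k + d * clampTo t₀ t)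
    (h2 : 0 ≤ x.1 m - (S.card : ℝ) * (d * clampTo t₀ t)) :
    fam x S m d t₀ t ∈ stdSimplex ℝ (Fin (n+1)) := by
  constructor
  · intro k
    unfold fam
    split_ifs with hk1 hk2
    · exact h1 k hk1
    · exact h2
    · exact x.2.1 k
  · exact fam_sum x hm d t₀ t

lemma fam_cont (x : Spx (n+1)) (S : Finset (Fin (n+1))) (m : Fin (n+1)) (d t₀ : ℝ) :
    Continuous fun t => fam x S m d t₀ t := by
  apply continuous_pi
  intro k
  by_cases h1 : k ∈ S
  · simp only [fam, if_pos h1]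
    exact continuous_const.add (continuous_const.mul (clampTo_cont t₀))
  · by_cases h2 : k = m
    · simp only [fam, if_neg h1, if_pos h2]
      exact continuous_const.sub (continuous_const.mul (continuous_const.mul (clampTo_cont t₀)))
    · simp only [fam, if_neg h1, if_neg h2]
      exact continuous_const

lemma fam_zero (x : Spx (n+1)) (S : Finset (Fin (n+1))) (m : Fin (n+1)) (d : ℝ)
    {t₀ : ℝ} (ht₀ : 0 ≤ t₀) : fam x S m d t₀ 0 = x.1 := by
  funext k
  unfold fam
  rw [clampTo_zero ht₀]
  split_ifs with h1 h2
  · ring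
  · rw [h2]; ring
  · rfl

/- the empty-pattern lemma -/

lemma empty_pattern {α β : ℝ} (hα1 : α < 1/((n:ℝ)+1)) (hβ1 : β < 1/((n:ℝ)+1))
    {Φ : Spx (n+1) ≃ₜ Spx (n+1)} (hΦ : IsComfort Φ) (hmap : ⇑Φ '' cross n α = cross n β)
    (x : Spx (n+1)) (hx : ∀ j, α < x.1 j) (j : Fin (n+1)) : β < (Φ x).1 j := by
  have hseg : ∀ t, seg x (center n) t ∉ cross n α := by
    rintro t ⟨k, hk⟩
    have h0 : 0 ≤ clampTo 1 t := clampTo_nonneg 1 t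
    have h1 : clampTo 1 t ≤ 1 := clampTo_le zero_le_one t
    have hcen : α < (center n).1 k := hα1
    have hgt : α < (seg x (center n) t).1 k := by
      rw [seg_coord]
      exact comb_gt h0 h1 (hx k) hcen
    exact ne_of_gt hgt hk
  have hΦne : ∀ t, (Φ (seg x (center n) t)).1 j ≠ β := by
    intro t hfeq
    exact hseg t ((mem_cross_iff hmap _).1 ⟨j, hfeq⟩)
  have hcont : Continuous fun t => (Φ (seg x (center n) t)).1 j :=
    (continuous_apply j).comp (continuous_subtype_val.comp
      (Φ.continuous.comp (seg_cont x (center n))))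
  have htr := sign_transfer hcont hΦne
  rw [seg_zero, seg_one, center_fix hΦ] at htr
  have hxcross : x ∉ cross n α := fun ⟨k, hk⟩ => ne_of_gt (hx k) hk
  have hne : (Φ x).1 j ≠ β := fun h => hxcross ((mem_cross_iff hmap x).1 ⟨j, h⟩)
  have hnot : ¬ ((Φ x).1 j < β) := by
    intro h
    have h2 : (1:ℝ)/((n:ℝ)+1) < β := htr.1 h
    linarith
  exact lt_of_le_of_ne (not_lt.1 hnot) (Ne.symm hne)

/- the pattern lemma -/

lemma pattern_lemma {α β : ℝ} (hα0 : 0 ≤ α) (hα1 : α < 1/((n:ℝ)+1))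
    (hβ0 : 0 ≤ β) (hβ1 : β < 1/((n:ℝ)+1))
    {Φ : Spx (n+1) ≃ₜ Spx (n+1)} (hΦ : IsComfort Φ) (hmap : ⇑Φ '' cross n α = cross n β)
    (x : Spx (n+1)) (hx : ∀ k, x.1 k ≠ α) (j : Fin (n+1)) :
    ((Φ x).1 j < β ↔ x.1 j < α) := by
  have hn1 : (0:ℝ) < (n:ℝ)+1 := by positivity
  by_cases hA : ∀ k, α < x.1 k
  · have h1 := empty_pattern hα1 hβ1 hΦ hmap x hA j
    constructor
    · intro h; linarith
    · intro h; linarith [hA j]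
  · push_neg at hA
    obtain ⟨k₀, hk₀⟩ := hA
    have hk₀' : x.1 k₀ < α := lt_of_le_of_ne hk₀ (hx k₀)
    have hαpos : 0 < α := lt_of_le_of_lt (x.2.1 k₀) hk₀'
    set A : Finset (Fin (n+1)) := Finset.univ.filter (fun k => x.1 k < α) with hAdef
    have hmemA : ∀ k, k ∈ A ↔ x.1 k < α := by
      intro k; rw [hAdef, Finset.mem_filter]
      simp only [Finset.mem_univ, true_and]
    have hk₀A : k₀ ∈ A := (hmemA k₀).2 hk₀'
    obtain ⟨m, hm⟩ := exists_big x
    have hmα : α < x.1 m := lt_of_lt_of_le hα1 hm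
    have hmA : m ∉ A := fun h => absurd ((hmemA m).1 h) (not_lt.2 hmα.le)
    have hcard_pos : 0 < A.card := Finset.card_pos.2 ⟨k₀, hk₀A⟩
    have hcard_lt : A.card < n+1 := by
      have hss : A ⊂ Finset.univ :=
        Finset.ssubset_univ_iff.2 (fun h => hmA (h ▸ Finset.mem_univ m))
      have := Finset.card_lt_card hss
      rwa [Finset.card_univ, Fintype.card_fin] at this
    have hK1 : (1:ℝ) ≤ (A.card : ℝ) := by exact_mod_cast hcard_pos
    have hKn : (A.card : ℝ) ≤ (n:ℝ) := by
      have : A.card ≤ n := Nat.lt_succ_iff.1 hcard_lt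
      exact_mod_cast this
    have hd : (0:ℝ) < (n:ℝ) + 1 - (A.card : ℝ) := by linarith
    have hαn : α * ((n:ℝ)+1) < 1 := by
      rw [lt_div_iff₀ hn1] at hα1; exact hα1
    have hβn : β * ((n:ℝ)+1) < 1 := by
      rw [lt_div_iff₀ hn1] at hβ1; exact hβ1
    -- the symmetric point p
    obtain ⟨b, hb, hbsum⟩ : ∃ b : ℝ, α < b ∧
        ((n:ℝ) + 1 - (A.card : ℝ)) * b = 1 - (A.card : ℝ) * (α/2) := by
      refine ⟨(1 - (A.card : ℝ) * (α/2)) / ((n:ℝ) + 1 - (A.card : ℝ)), ?_, ?_⟩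
      · rw [lt_div_iff₀ hd]
        nlinarith
      · exact mul_div_cancel₀ _ (ne_of_gt hd)
    have haα : α/2 < α := by linarith
    have ha0 : (0:ℝ) ≤ α/2 := by linarith
    set p : Spx (n+1) := ⟨fun i => if i ∈ A then α/2 else b, by
      constructor
      · intro i
        dsimp only
        split_ifs
        · exact ha0
        · linarith
      · have hre : ∀ i : Fin (n+1), (if i ∈ A then α/2 else b)
            = b + (if i ∈ A then α/2 - b else 0) := fun i => by split_ifs <;> ring
        simp_rw [hre]
        rw [Finset.sum_add_distrib, Finset.sum_const, Finset.sum_ite_mem,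
          Finset.univ_inter, Finset.sum_const, Finset.card_univ, Fintype.card_fin,
          nsmul_eq_mul, nsmul_eq_mul]
        push_cast
        nlinarith [hbsum]⟩ with hpdef
    have hpcoord : ∀ i, p.1 i = if i ∈ A then α/2 else b := fun i => rfl
    have hp_ne : ∀ i, p.1 i ≠ α := by
      intro i
      rw [hpcoord]
      split_ifs
      · exact ne_of_lt haα
      · exact ne_of_gt hb
    have hp_not : p ∉ cross n α := fun ⟨i, hi⟩ => hp_ne i hi
    -- segment from x to p avoids the cross
    have hseg : ∀ t, seg x p t ∉ cross n α := by
      rintro t ⟨i, hi⟩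
      have h0 : 0 ≤ clampTo 1 t := clampTo_nonneg 1 t
      have h1 : clampTo 1 t ≤ 1 := clampTo_le zero_le_one t
      by_cases hiA : i ∈ A
      · have hxi : x.1 i < α := (hmemA i).1 hiA
        have hpi : p.1 i < α := by rw [hpcoord, if_pos hiA]; exact haα
        have : (seg x p t).1 i < α := by
          rw [seg_coord]; exact comb_lt h0 h1 hxi hpi
        exact ne_of_lt this hi
      · have hxi : α < x.1 i :=
          lt_of_le_of_ne (not_lt.1 (fun h => hiA ((hmemA i).2 h))) (Ne.symm (hx i))
        have hpi : α < p.1 i := by rw [hpcoord, if_neg hiA]; exact hb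
        have : α < (seg x p t).1 i := by
          rw [seg_coord]; exact comb_gt h0 h1 hxi hpi
        exact ne_of_gt this hi
    -- Φ p is constant on A and off A
    have hconst : ∀ i, i ∈ A → (Φ p).1 i = (Φ p).1 k₀ := by
      intro i hi
      refine eq_coord hΦ.perm p ?_
      rw [hpcoord, hpcoord, if_pos hi, if_pos hk₀A]
    have hconst' : ∀ i, i ∉ A → (Φ p).1 i = (Φ p).1 m := by
      intro i hi
      refine eq_coord hΦ.perm p ?_
      rw [hpcoord, hpcoord, if_neg hi, if_neg hmA]
    have hΦp_ne : ∀ i, (Φ p).1 i ≠ β :=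
      fun i h => hp_not ((mem_cross_iff hmap p).1 ⟨i, h⟩)
    have hef : (Φ p).1 k₀ ≤ (Φ p).1 m := by
      refine hΦ.mono p k₀ m ?_
      rw [hpcoord, hpcoord, if_pos hk₀A, if_neg hmA]
      linarith
    have heβ : (Φ p).1 k₀ < β := by
      by_contra hcon
      have he' : β < (Φ p).1 k₀ := lt_of_le_of_ne (not_lt.1 hcon) (Ne.symm (hΦp_ne k₀))
      have hall : ∀ i, β < (Φ p).1 i := by
        intro i
        by_cases hiA : i ∈ A
        · rw [hconst i hiA]; exact he'
        · rw [hconst' i hiA]; linarith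
      have h5 := empty_pattern hβ1 hα1 (comfort_symm hΦ) (hmap_symm hmap) (Φ p) hall k₀
      simp only [Homeomorph.symm_apply_apply] at h5
      rw [hpcoord, if_pos hk₀A] at h5
      linarith
    have hfβ : β < (Φ p).1 m := by
      by_contra hcon
      have hf' : (Φ p).1 m < β := lt_of_le_of_ne (not_lt.1 hcon) (hΦp_ne m)
      have hall : ∀ i, (Φ p).1 i < β := by
        intro i
        by_cases hiA : i ∈ A
        · rw [hconst i hiA]; linarith
        · rw [hconst' i hiA]; exact hf'
      have hsum : ∑ i, (Φ p).1 i < ∑ _i : Fin (n+1), β :=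
        Finset.sum_lt_sum_of_nonempty Finset.univ_nonempty fun i _ => hall i
      rw [(Φ p).2.2, Finset.sum_const, Finset.card_univ, Fintype.card_fin,
        nsmul_eq_mul] at hsum
      push_cast at hsum
      nlinarith
    -- sign transfer along the segment
    have hΦne : ∀ t, (Φ (seg x p t)).1 j ≠ β :=
      fun t h => hseg t ((mem_cross_iff hmap _).1 ⟨j, h⟩)
    have hcont : Continuous fun t => (Φ (seg x p t)).1 j :=
      (continuous_apply j).comp (continuous_subtype_val.comp
        (Φ.continuous.comp (seg_cont x p)))
    have htr := sign_transfer hcont hΦne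
    rw [seg_zero, seg_one] at htr
    by_cases hjA : j ∈ A
    · have h1 : (Φ p).1 j < β := by rw [hconst j hjA]; exact heβ
      exact iff_of_true (htr.2 h1) ((hmemA j).1 hjA)
    · have h1 : ¬ (Φ p).1 j < β := by rw [hconst' j hjA]; linarith
      exact iff_of_false (fun h => h1 (htr.1 h)) (fun h => hjA ((hmemA j).2 h))

/- pushing the α-coordinates up / down -/

lemma coord_up {α β : ℝ} (hα0 : 0 ≤ α) (hα1 : α < 1/((n:ℝ)+1))
    (hβ0 : 0 ≤ β) (hβ1 : β < 1/((n:ℝ)+1))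
    {Φ : Spx (n+1) ≃ₜ Spx (n+1)} (hΦ : IsComfort Φ) (hmap : ⇑Φ '' cross n α = cross n β)
    (x : Spx (n+1)) (i : Fin (n+1)) (hxi : x.1 i = α) : β ≤ (Φ x).1 i := by
  obtain ⟨m, hm⟩ := exists_big x
  have hmα : α < x.1 m := lt_of_lt_of_le hα1 hm
  set S : Finset (Fin (n+1)) := Finset.univ.filter (fun k => x.1 k = α) with hSdef
  have hmemS : ∀ k, k ∈ S ↔ x.1 k = α := by
    intro k; rw [hSdef, Finset.mem_filter]; simp only [Finset.mem_univ, true_and]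
  have hiS : i ∈ S := (hmemS i).2 hxi
  have hmS : m ∉ S := fun h => ne_of_gt hmα ((hmemS m).1 h)
  have hs1 : (1:ℝ) ≤ (S.card:ℝ) := by exact_mod_cast Finset.card_pos.2 ⟨i, hiS⟩
  set t₀ : ℝ := (x.1 m - α)/((S.card:ℝ)+1) with ht₀def
  have ht₀ : 0 < t₀ := div_pos (by linarith) (by linarith)
  have hst₀ : (S.card:ℝ) * t₀ < x.1 m - α := by
    rw [ht₀def, ← mul_div_assoc, div_lt_iff₀ (by linarith : (0:ℝ) < (S.card:ℝ)+1)]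
    nlinarith
  have hmem : ∀ t, fam x S m 1 t₀ t ∈ stdSimplex ℝ (Fin (n+1)) := by
    intro t
    have hc0 := clampTo_nonneg t₀ t
    have hct := clampTo_le ht₀.le t
    refine fam_mem x hmS 1 t₀ t (fun k hk => ?_) ?_
    · have := x.2.1 k; nlinarith
    · have h3 : (S.card:ℝ) * (1 * clampTo t₀ t) ≤ (S.card:ℝ) * t₀ := by
        rw [one_mul]; exact mul_le_mul_of_nonneg_left hct (by linarith)
      nlinarith
  set η : ℝ → Spx (n+1) := fun t => ⟨fam x S m 1 t₀ t, hmem t⟩ with hηdef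
  have hη0 : η 0 = x := Subtype.ext (fam_zero x S m 1 ht₀.le)
  have hηcont : Continuous η := Continuous.subtype_mk (fam_cont x S m 1 t₀) _
  have hkey : ∀ t ∈ Set.Ioc (0:ℝ) t₀, β ≤ (Φ (η t)).1 i := by
    intro t ht
    have hct : clampTo t₀ t = t := clampTo_of_mem ht.1.le ht.2
    have hne : ∀ k, (η t).1 k ≠ α := by
      intro k
      show fam x S m 1 t₀ t k ≠ α
      unfold fam
      rw [hct]
      split_ifs with h1 h2
      · rw [(hmemS k).1 h1]
        have := ht.1
        intro hh; linarith
      · have h3 : (S.card:ℝ) * (1*t) < x.1 m - α := by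
          rw [one_mul]
          calc (S.card:ℝ) * t ≤ (S.card:ℝ) * t₀ :=
                mul_le_mul_of_nonneg_left ht.2 (by linarith)
            _ < x.1 m - α := hst₀
        intro hh; nlinarith
      · exact fun hh => h1 ((hmemS k).2 hh)
    have hnotlt : ¬ ((η t).1 i < α) := by
      show ¬ (fam x S m 1 t₀ t i < α)
      unfold fam
      rw [hct, if_pos hiS, hxi]
      have := ht.1
      intro hh; linarith
    have hpat := pattern_lemma hα0 hα1 hβ0 hβ1 hΦ hmap (η t) hne i
    by_contra hcon
    push_neg at hcon
    exact hnotlt (hpat.1 hcon)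
  have hcont2 : Continuous fun t => (Φ (η t)).1 i :=
    (continuous_apply i).comp (continuous_subtype_val.comp (Φ.continuous.comp hηcont))
  have htend : Filter.Tendsto (fun t => (Φ (η t)).1 i)
      (nhdsWithin 0 (Set.Ioi 0)) (nhds ((Φ x).1 i)) := by
    have h1 : Filter.Tendsto (fun t => (Φ (η t)).1 i) (nhds 0) (nhds ((Φ (η 0)).1 i)) :=
      hcont2.tendsto 0
    rw [hη0] at h1
    exact h1.mono_left nhdsWithin_le_nhds
  refine ge_of_tendsto htend ?_
  filter_upwards [Ioc_mem_nhdsGT ht₀] with t ht using hkey t ht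

lemma coord_down {α β : ℝ} (hα0 : 0 ≤ α) (hα1 : α < 1/((n:ℝ)+1))
    (hβ0 : 0 ≤ β) (hβ1 : β < 1/((n:ℝ)+1)) (hαpos : 0 < α)
    {Φ : Spx (n+1) ≃ₜ Spx (n+1)} (hΦ : IsComfort Φ) (hmap : ⇑Φ '' cross n α = cross n β)
    (x : Spx (n+1)) (i : Fin (n+1)) (hxi : x.1 i = α) : (Φ x).1 i ≤ β := by
  obtain ⟨m, hm⟩ := exists_big x
  have hmα : α < x.1 m := lt_of_lt_of_le hα1 hm
  set S : Finset (Fin (n+1)) := Finset.univ.filter (fun k => x.1 k = α) with hSdef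
  have hmemS : ∀ k, k ∈ S ↔ x.1 k = α := by
    intro k; rw [hSdef, Finset.mem_filter]; simp only [Finset.mem_univ, true_and]
  have hiS : i ∈ S := (hmemS i).2 hxi
  have hmS : m ∉ S := fun h => ne_of_gt hmα ((hmemS m).1 h)
  have hs0 : (0:ℝ) ≤ (S.card:ℝ) := by positivity
  set t₀ : ℝ := α/2 with ht₀def
  have ht₀ : 0 < t₀ := by rw [ht₀def]; linarith
  have hmem : ∀ t, fam x S m (-1) t₀ t ∈ stdSimplex ℝ (Fin (n+1)) := by
    intro t
    have hc0 := clampTo_nonneg t₀ t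
    have hct := clampTo_le ht₀.le t
    refine fam_mem x hmS (-1) t₀ t (fun k hk => ?_) ?_
    · have := (hmemS k).1 hk
      rw [this]
      rw [ht₀def] at hct
      nlinarith
    · have := x.2.1 m
      nlinarith
  set η : ℝ → Spx (n+1) := fun t => ⟨fam x S m (-1) t₀ t, hmem t⟩ with hηdef
  have hη0 : η 0 = x := Subtype.ext (fam_zero x S m (-1) ht₀.le)
  have hηcont : Continuous η := Continuous.subtype_mk (fam_cont x S m (-1) t₀) _
  have hkey : ∀ t ∈ Set.Ioc (0:ℝ) t₀, (Φ (η t)).1 i ≤ β := by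
    intro t ht
    have hct : clampTo t₀ t = t := clampTo_of_mem ht.1.le ht.2
    have hne : ∀ k, (η t).1 k ≠ α := by
      intro k
      show fam x S m (-1) t₀ t k ≠ α
      unfold fam
      rw [hct]
      split_ifs with h1 h2
      · rw [(hmemS k).1 h1]
        have := ht.1
        intro hh; linarith
      · have := ht.1
        intro hh; nlinarith
      · exact fun hh => h1 ((hmemS k).2 hh)
    have hlt : (η t).1 i < α := by
      show fam x S m (-1) t₀ t i < α
      unfold fam
      rw [hct, if_pos hiS, hxi]
      have := ht.1
      linarith
    have hpat := pattern_lemma hα0 hα1 hβ0 hβ1 hΦ hmap (η t) hne i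
    exact (hpat.2 hlt).le
  have hcont2 : Continuous fun t => (Φ (η t)).1 i :=
    (continuous_apply i).comp (continuous_subtype_val.comp (Φ.continuous.comp hηcont))
  have htend : Filter.Tendsto (fun t => (Φ (η t)).1 i)
      (nhdsWithin 0 (Set.Ioi 0)) (nhds ((Φ x).1 i)) := by
    have h1 : Filter.Tendsto (fun t => (Φ (η t)).1 i) (nhds 0) (nhds ((Φ (η 0)).1 i)) :=
      hcont2.tendsto 0
    rw [hη0] at h1
    exact h1.mono_left nhdsWithin_le_nhds
  refine le_of_tendsto htend ?_
  filter_upwards [Ioc_mem_nhdsGT ht₀] with t ht using hkey t ht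

/- α > 0 forces β > 0 -/

lemma beta_pos (hn : 1 ≤ n) {α β : ℝ} (hα0 : 0 ≤ α) (hα1 : α < 1/((n:ℝ)+1))
    (hβ0 : 0 ≤ β) (hβ1 : β < 1/((n:ℝ)+1))
    {Φ : Spx (n+1) ≃ₜ Spx (n+1)} (hΦ : IsComfort Φ) (hmap : ⇑Φ '' cross n α = cross n β)
    (hαpos : 0 < α) : 0 < β := by
  rcases hβ0.eq_or_lt with hβ | hβ
  · exfalso
    have hn1 : (0:ℝ) < (n:ℝ) := by exact_mod_cast hn
    have hαn : α * ((n:ℝ)+1) < 1 := by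
      rw [lt_div_iff₀ (by positivity : (0:ℝ) < (n:ℝ)+1)] at hα1; exact hα1
    have hbα : α < (1 - α/2)/(n:ℝ) := by
      rw [lt_div_iff₀ hn1]; nlinarith
    set q : Spx (n+1) := ⟨fun k => if k = 0 then α/2 else (1 - α/2)/(n:ℝ), by
      constructor
      · intro k
        dsimp only
        split_ifs
        · linarith
        · linarith
      · rw [Fin.sum_univ_succ, if_pos rfl]
        have hterm : ∀ j : Fin n,
            (if (j.succ : Fin (n+1)) = 0 then α/2 else (1 - α/2)/(n:ℝ))
              = (1 - α/2)/(n:ℝ) := fun j => if_neg (Fin.succ_ne_zero j)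
        rw [Finset.sum_congr rfl (fun j _ => hterm j), Finset.sum_const,
          Finset.card_univ, Fintype.card_fin, nsmul_eq_mul,
          mul_div_cancel₀ _ (ne_of_gt hn1)]
        ring⟩ with hqdef
    have hq_ne : ∀ k, q.1 k ≠ α := by
      intro k
      show (if k = 0 then α/2 else (1 - α/2)/(n:ℝ)) ≠ α
      split_ifs
      · linarith
      · linarith
    have hq0 : q.1 0 < α := by
      show (if (0 : Fin (n+1)) = 0 then α/2 else (1 - α/2)/(n:ℝ)) < α
      rw [if_pos rfl]
      linarith
    have hlt := (pattern_lemma hα0 hα1 hβ0 hβ1 hΦ hmap q hq_ne 0).2 hq0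
    rw [← hβ] at hlt
    exact absurd hlt (not_lt.2 ((Φ q).2.1 0))
  · exact hβ

end CF

theorem comfort_cross_component_iff (n : ℕ) (hn : 1 ≤ n) (α β : ℝ)
    (hα0 : 0 ≤ α) (hα1 : α < 1/((n:ℝ)+1))
    (hβ0 : 0 ≤ β) (hβ1 : β < 1/((n:ℝ)+1))
    (Φ : Spx (n+1) ≃ₜ Spx (n+1)) (hΦ : IsComfort Φ)
    (hmap : ⇑Φ '' cross n α = cross n β) :
    ∀ (x : Spx (n+1)) (i : Fin (n+1)), x.1 i = α ↔ (Φ x).1 i = β := by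
  intro x i
  have hΦs : IsComfort Φ.symm := CF.comfort_symm hΦ
  have hmaps : ⇑Φ.symm '' cross n β = cross n α := CF.hmap_symm hmap
  rcases hα0.eq_or_lt with hα | hαpos
  · rcases hβ0.eq_or_lt with hβ | hβpos
    · -- α = 0 and β = 0
      constructor
      · intro h
        have hx : x ∈ cross n α := ⟨i, h⟩
        obtain ⟨j, hj⟩ := (CF.mem_cross_iff hmap x).2 hx
        have h1 : x.1 i ≤ x.1 j := by rw [h, ← hα]; exact x.2.1 j
        have h2 := hΦ.mono x i j h1
        rw [hj] at h2
        exact le_antisymm h2 (by rw [← hβ]; exact (Φ x).2.1 i)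
      · intro h
        have hx : Φ x ∈ cross n β := ⟨i, h⟩
        obtain ⟨j, hj⟩ := (CF.mem_cross_iff hmap x).1 hx
        have h1 : (Φ x).1 i ≤ (Φ x).1 j := by rw [h, ← hβ]; exact (Φ x).2.1 j
        have h2 := hΦs.mono (Φ x) i j h1
        simp only [Homeomorph.symm_apply_apply] at h2
        rw [hj] at h2
        exact le_antisymm h2 (by rw [← hα]; exact x.2.1 i)
    · -- α = 0, β > 0 : impossible
      exfalso
      have h0 := CF.beta_pos hn hβ0 hβ1 hα0 hα1 hΦs hmaps hβpos
      rw [← hα] at h0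
      exact lt_irrefl 0 h0
  · rcases hβ0.eq_or_lt with hβ | hβpos
    · -- α > 0, β = 0 : impossible
      exfalso
      have h0 := CF.beta_pos hn hα0 hα1 hβ0 hβ1 hΦ hmap hαpos
      rw [← hβ] at h0
      exact lt_irrefl 0 h0
    · constructor
      · intro h
        exact le_antisymm (CF.coord_down hα0 hα1 hβ0 hβ1 hαpos hΦ hmap x i h)
          (CF.coord_up hα0 hα1 hβ0 hβ1 hΦ hmap x i h)
      · intro h
        have h1 := CF.coord_up hβ0 hβ1 hα0 hα1 hΦs hmaps (Φ x) i h
        have h2 := CF.coord_down hβ0 hβ1 hα0 hα1 hβpos hΦs hmaps (Φ x) i h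
        simp only [Homeomorph.symm_apply_apply] at h1 h2
        exact le_antisymm h2 h1


end
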